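/- arXiv:2312.08604 — 4 statements merged into one kernel-verified Lean document; each statement's English description precedes it below -/
import Mathlib

section
/- Let μ be a probability measure on a measurable space S, let J, V : S → ℝ be measurable functions with J(x) ≤ V(x) for all x ∈ S, let N, k be natural numbers with k ≤ N, and let ε, β ∈ (0,1) satisfy ∑_{i=0}^{k} C(N,i) · ε^i · (1−ε)^{N−i} ≤ β. Then, under the product measure μ^⊗N, the probability of the event {(x_1,…,x_N) : at most k indices i satisfy J(x_i) ≤ 0, and μ({x : V(x) ≤ 0}) > ε} is at most β. Equivalently, with probability at least 1−β over the N i.i.d. samples, either more than k empirical safety violations are observed or μ({x : V(x) ≤ 0}) ≤ ε. (Robust Scenario-Based Probabilistic Safety Verification Theorem.) -/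
open MeasureTheory Finset ENNReal

lemma binomCdf_hasDerivAt (N k : ℕ) (q : ℝ) :
    HasDerivAt (fun q : ℝ => ∑ i ∈ range (k + 1),
        (N.choose i : ℝ) * q ^ i * (1 - q) ^ (N - i))
      (-((N.choose k : ℝ) * (N - k : ℕ) * q ^ k * (1 - q) ^ (N - k - 1))) q := by
  set c : ℕ → ℝ := fun i => (N.choose i : ℝ) * i * q ^ (i - 1) * (1 - q) ^ (N - i) with hc
  have key : ∀ i, c (i + 1) =
      (N.choose i : ℝ) * (N - i : ℕ) * q ^ i * (1 - q) ^ (N - i - 1) := by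
    intro i
    have h := Nat.choose_succ_right_eq N i
    have h' : ((N.choose (i+1) : ℝ) * ((i:ℝ)+1)) = (N.choose i : ℝ) * (N - i : ℕ) := by
      exact_mod_cast congrArg (Nat.cast : ℕ → ℝ) h
    simp only [hc]
    rw [show (i + 1) - 1 = i from rfl, show N - (i + 1) = N - i - 1 from rfl]
    push_cast at h' ⊢
    rw [h']
  have hterm : ∀ i ∈ range (k + 1), HasDerivAt
      (fun q : ℝ => (N.choose i : ℝ) * q ^ i * (1 - q) ^ (N - i))
      (c i - c (i + 1)) q := by
    intro i hi
    have h1 : HasDerivAt (fun q : ℝ => (N.choose i : ℝ) * q ^ i)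
        ((N.choose i : ℝ) * ((i : ℝ) * q ^ (i - 1))) q :=
      (hasDerivAt_pow i q).const_mul _
    have h2 : HasDerivAt (fun q : ℝ => (1 - q) ^ (N - i))
        (((N - i : ℕ) : ℝ) * (1 - q) ^ (N - i - 1) * (0 - 1)) q :=
      (hasDerivAt_pow (N - i) (1 - q)).comp q
        ((hasDerivAt_const q (1:ℝ)).sub (hasDerivAt_id q))
    have h3 := h1.fun_mul h2
    refine h3.congr_deriv ?_
    rw [key i]
    simp only [hc]
    ring
  have hsum := HasDerivAt.fun_sum hterm
  have tele : ∑ i ∈ range (k + 1), (c i - c (i + 1)) = c 0 - c (k + 1) :=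
    Finset.sum_range_sub' c (k + 1)
  rw [tele] at hsum
  refine hsum.congr_deriv ?_
  rw [key k]
  simp [hc]

lemma binomCdf_antitoneOn (N k : ℕ) :
    AntitoneOn (fun q : ℝ => ∑ i ∈ range (k + 1),
        (N.choose i : ℝ) * q ^ i * (1 - q) ^ (N - i)) (Set.Icc 0 1) := by
  apply antitoneOn_of_deriv_nonpos (convex_Icc 0 1)
  · exact Continuous.continuousOn (by continuity)
  · intro x _
    exact ((binomCdf_hasDerivAt N k x).differentiableAt).differentiableWithinAt
  · intro x hx
    rw [interior_Icc, Set.mem_Ioo] at hx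
    rw [(binomCdf_hasDerivAt N k x).deriv]
    have h1x : (0:ℝ) ≤ 1 - x := by linarith [hx.2]
    have hnn : (0:ℝ) ≤ (N.choose k : ℝ) * (N - k : ℕ) * x ^ k * (1 - x) ^ (N - k - 1) :=
      mul_nonneg (mul_nonneg (mul_nonneg (Nat.cast_nonneg _) (Nat.cast_nonneg _))
        (pow_nonneg hx.1.le k)) (pow_nonneg h1x _)
    linarith

lemma binom_measure_le {S : Type*} [MeasurableSpace S]
    (μ : Measure S) [IsProbabilityMeasure μ] (p : S → Prop) [DecidablePred p]
    (N k : ℕ) :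
    Measure.pi (fun _ : Fin N => μ)
        {x : Fin N → S | (Finset.univ.filter (fun i => p (x i))).card ≤ k}
      ≤ ∑ i ∈ range (k + 1),
          (N.choose i : ℝ≥0∞) * μ {y | p y} ^ i * μ {y | p y}ᶜ ^ (N - i) := by
  classical
  set A : Set S := {y | p y} with hAdef
  set ν := Measure.pi (fun _ : Fin N => μ)
  set s : Finset (Finset (Fin N)) := univ.filter (fun T => T.card ≤ k) with hs
  have hsub : {x : Fin N → S | (Finset.univ.filter (fun i => p (x i))).card ≤ k}
      ⊆ ⋃ T ∈ s, Set.univ.pi (fun i => if i ∈ T then A else Aᶜ) := by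
    intro x hx
    refine Set.mem_biUnion (show univ.filter (fun i => p (x i)) ∈ s by
      simp [hs]; exact hx) ?_
    intro i _
    by_cases h : p (x i) <;> simp [h, hAdef]
  refine le_trans (le_trans (measure_mono hsub) (measure_biUnion_finset_le s _))
    (le_of_eq ?_)
  have hval : ∀ T : Finset (Fin N),
      ν (Set.univ.pi (fun i => if i ∈ T then A else Aᶜ)) =
        μ A ^ T.card * μ Aᶜ ^ (N - T.card) := by
    intro T
    rw [show ν = Measure.pi (fun _ : Fin N => μ) from rfl, Measure.pi_pi]
    simp only [apply_ite μ]
    rw [Finset.prod_ite (fun _ => μ A) (fun _ => μ Aᶜ)]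
    simp only [Finset.prod_const]
    congr 2
    · simp
    · rw [Finset.filter_not, Finset.filter_mem_eq_inter, Finset.univ_inter]
      simp [Finset.card_sdiff_of_subset (Finset.subset_univ T)]
  calc ∑ T ∈ s, ν (Set.univ.pi (fun i => if i ∈ T then A else Aᶜ))
      = ∑ T ∈ s, μ A ^ T.card * μ Aᶜ ^ (N - T.card) :=
        Finset.sum_congr rfl fun T _ => hval T
    _ = ∑ i ∈ range (k + 1), (N.choose i : ℝ≥0∞) * μ A ^ i * μ Aᶜ ^ (N - i) := by
        have hdecomp : s = (range (k + 1)).biUnion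
            (fun i => Finset.powersetCard i (univ : Finset (Fin N))) := by
          ext T
          simp [hs, Finset.mem_powersetCard, Nat.lt_succ_iff]
        rw [hdecomp, Finset.sum_biUnion]
        · refine Finset.sum_congr rfl fun i _ => ?_
          rw [Finset.sum_congr rfl (fun T hT => by
            rw [(Finset.mem_powersetCard.mp hT).2]), Finset.sum_const,
            Finset.card_powersetCard]
          simp [mul_assoc, nsmul_eq_mul]
        · intro a ha b hb hab
          simp only [Function.onFun]
          rw [Finset.disjoint_left]
          intro T hTa hTb
          exact hab ((Finset.mem_powersetCard.mp hTa).2.symm.trans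
            (Finset.mem_powersetCard.mp hTb).2)

/-- Robust Scenario-Based Probabilistic Safety Verification
Theorem: if `J ≤ V` pointwise and `∑_{i=0}^{k} C(N,i) ε^i (1-ε)^{N-i} ≤ β`,
then the probability (under `N` i.i.d. samples from `μ`) of the event
"at most `k` empirical safety violations are observed, yet
`μ{x : V(x) ≤ 0} > ε`" is at most `β`. -/
theorem robust_scenario_verification {S : Type*} [MeasurableSpace S]
    (μ : Measure S) [IsProbabilityMeasure μ]
    (J V : S → ℝ) (hJ : Measurable J) (hV : Measurable V)
    (hJV : ∀ x, J x ≤ V x)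
    (N k : ℕ) (hk : k ≤ N) (ε β : ℝ)
    (hε : ε ∈ Set.Ioo (0 : ℝ) 1) (hβ : β ∈ Set.Ioo (0 : ℝ) 1)
    (hcond : ∑ i ∈ Finset.range (k + 1),
        (N.choose i : ℝ) * ε ^ i * (1 - ε) ^ (N - i) ≤ β) :
    Measure.pi (fun _ : Fin N => μ)
        {x : Fin N → S | (Finset.univ.filter (fun i => J (x i) ≤ 0)).card ≤ k ∧
          ENNReal.ofReal ε < μ {s | V s ≤ 0}}
      ≤ ENNReal.ofReal β := by
  by_cases hVε : ENNReal.ofReal ε < μ {s | V s ≤ 0}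
  · have hset : {x : Fin N → S |
        (Finset.univ.filter (fun i => J (x i) ≤ 0)).card ≤ k ∧
          ENNReal.ofReal ε < μ {s | V s ≤ 0}}
        = {x : Fin N → S | (Finset.univ.filter (fun i => J (x i) ≤ 0)).card ≤ k} := by
      ext x; simp [hVε]
    rw [hset]
    set A : Set S := {y | J y ≤ 0} with hAdef
    have hVA : {s | V s ≤ 0} ⊆ A := fun s hs => le_trans (hJV s) hs
    have hAtop : μ A ≠ ⊤ := measure_ne_top μ A
    set q : ℝ := (μ A).toReal with hqdef
    have hq0 : 0 ≤ q := ENNReal.toReal_nonneg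
    have hq1 : q ≤ 1 := by
      have := prob_le_one (μ := μ) (s := A)
      simpa [hqdef] using ENNReal.toReal_mono ENNReal.one_ne_top this
    have hεq : ε < q := by
      have h1 : ENNReal.ofReal ε < μ A := lt_of_lt_of_le hVε (measure_mono hVA)
      exact (ENNReal.ofReal_lt_iff_lt_toReal hε.1.le hAtop).mp h1
    have hμA : μ A = ENNReal.ofReal q := (ENNReal.ofReal_toReal hAtop).symm
    have hμAc : μ Aᶜ = ENNReal.ofReal (1 - q) := by
      have hcompl : μ Aᶜ = 1 - μ A :=
        prob_compl_eq_one_sub (measurableSet_le hJ measurable_const)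
      rw [hcompl, hμA, ← ENNReal.ofReal_one, ← ENNReal.ofReal_sub _ hq0]
    have hbound := binom_measure_le μ (fun y => J y ≤ 0) N k
    refine le_trans hbound ?_
    have hsum : ∑ i ∈ range (k + 1),
        (N.choose i : ℝ≥0∞) * μ A ^ i * μ Aᶜ ^ (N - i)
        = ENNReal.ofReal (∑ i ∈ range (k + 1),
            (N.choose i : ℝ) * q ^ i * (1 - q) ^ (N - i)) := by
      rw [ENNReal.ofReal_sum_of_nonneg (fun i _ => by
        have h1q : (0:ℝ) ≤ 1 - q := by linarith
        positivity)]
      refine Finset.sum_congr rfl fun i _ => ?_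
      rw [hμA, hμAc, ENNReal.ofReal_mul (by positivity), ENNReal.ofReal_mul (by positivity),
        ENNReal.ofReal_pow hq0, ENNReal.ofReal_pow (by linarith), ENNReal.ofReal_natCast]
    rw [show μ {y | J y ≤ 0} = μ A from rfl, show μ {y | J y ≤ 0}ᶜ = μ Aᶜ from rfl, hsum]
    refine ENNReal.ofReal_le_ofReal (le_trans ?_ hcond)
    exact binomCdf_antitoneOn N k ⟨hε.1.le, hε.2.le⟩ ⟨hq0, hq1⟩ hεq.le
  · have hset : {x : Fin N → S |
        (Finset.univ.filter (fun i => J (x i) ≤ 0)).card ≤ k ∧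
          ENNReal.ofReal ε < μ {s | V s ≤ 0}} = ∅ := by
      ext x; simp [hVε]
    rw [hset]
    simp
end

section
/- Let μ be an atomless probability measure on ℝ, let Y_1,…,Y_N be i.i.d. random variables with law μ, let k be a natural number with k < N, and let Y_{(N−k)} denote the (N−k)-th order statistic of Y_1,…,Y_N. Then for every x ∈ [0,1], the probability under the product measure μ^⊗N that μ((−∞, Y_{(N−k)}]) ≤ x equals ∑_{j=N−k}^{N} C(N,j) · x^j · (1−x)^{N−j}; that is, the random coverage μ((−∞, Y_{(N−k)}]) of the conformal prediction set is distributed Beta(N−k, k+1). (Conformal Probabilistic Safety Verification Theorem.) -/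
open MeasureTheory Finset

/-- The `(N-k)`-th order statistic (1-indexed) of `y : Fin N → ℝ`: the value in
position `N-k` when `y₁, …, y_N` are sorted in nondecreasing order (counting
multiplicity). -/
noncomputable def orderStat {N : ℕ} (k : ℕ) (y : Fin N → ℝ) : ℝ :=
  ((Multiset.map y Finset.univ.val).sort (· ≤ ·)).getD (N - k - 1) 0

section Part2
open ProbabilityTheory Set Filter

lemma cdf_cont (μ : Measure ℝ) [IsProbabilityMeasure μ] [NullSingletonClass μ] :
    Continuous (cdf μ) := by
  rw [continuous_iff_continuousAt]
  intro a
  have hm : Monotone (cdf μ) := monotone_cdf μ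
  rw [hm.continuousAt_iff_leftLim_eq_rightLim]
  have h1 : Function.rightLim (cdf μ) a = cdf μ a := (cdf μ).rightLim_eq a
  have h2 : (cdf μ).measure {a} = 0 := by rw [measure_cdf]; exact measure_singleton a
  rw [(cdf μ).measure_singleton] at h2
  have h3 : cdf μ a - Function.leftLim (cdf μ) a ≤ 0 := ENNReal.ofReal_eq_zero.mp h2
  have h4 : Function.leftLim (cdf μ) a ≤ cdf μ a := hm.leftLim_le le_rfl
  rw [h1]; linarith

lemma measure_cdf_le (μ : Measure ℝ) [IsProbabilityMeasure μ] [NullSingletonClass μ]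
    {x : ℝ} (hx0 : 0 ≤ x) (hx1 : x ≤ 1) :
    μ {t | (μ (Iic t)).toReal ≤ x} = ENNReal.ofReal x := by
  have hc := cdf_cont μ
  have hm : Monotone (cdf μ) := monotone_cdf μ
  have hset : {t | (μ (Iic t)).toReal ≤ x} = cdf μ ⁻¹' Iic x := by
    ext t; simp [cdf_eq_real, Measure.real]
  rw [hset]
  rcases eq_or_lt_of_le hx1 with h1 | h1
  · subst h1
    have : cdf μ ⁻¹' Iic (1:ℝ) = Set.univ := by
      ext t; simpa using cdf_le_one μ t
    simp [this]
  obtain ⟨c, hc'⟩ : ∃ c, x < cdf μ c :=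
    ((tendsto_cdf_atTop μ).eventually (eventually_gt_nhds h1)).exists
  have hbdd : BddAbove (cdf μ ⁻¹' Iic x) := by
    refine ⟨c, fun s hs => ?_⟩
    by_contra h
    push_neg at h
    exact absurd (hm h.le) (by simp only [Set.mem_preimage, Set.mem_Iic] at hs; linarith)
  rcases eq_empty_or_nonempty (cdf μ ⁻¹' Iic x) with he | hne
  · have hx0' : x ≤ 0 := by
      by_contra h
      push_neg at h
      obtain ⟨t, ht⟩ := ((tendsto_cdf_atBot μ).eventually (eventually_lt_nhds h)).exists
      have : t ∈ cdf μ ⁻¹' Iic x := ht.le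
      rw [he] at this
      exact this
    have hx : x = 0 := le_antisymm hx0' hx0
    rw [he, hx]
    simp
  · have hclosed : IsClosed (cdf μ ⁻¹' Iic x) := IsClosed.preimage hc isClosed_Iic
    set a := sSup (cdf μ ⁻¹' Iic x) with ha
    have hmem : a ∈ cdf μ ⁻¹' Iic x := hclosed.csSup_mem hne hbdd
    have hIic : cdf μ ⁻¹' Iic x = Iic a := by
      ext t
      exact ⟨fun ht => le_csSup hbdd ht, fun ht => le_trans (hm ht) hmem⟩
    have hle : cdf μ a ≤ x := hmem
    have hge : x ≤ cdf μ a := by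
      by_contra h
      push_neg at h
      have hev : ∀ᶠ t in nhds a, cdf μ t < x :=
        hc.continuousAt.eventually_lt continuousAt_const h
      have hev' : ∀ᶠ t in nhdsWithin a (Ioi a), cdf μ t < x :=
        hev.filter_mono nhdsWithin_le_nhds
      obtain ⟨t, ht1, ht2⟩ := (hev'.and self_mem_nhdsWithin).exists
      exact absurd (le_csSup hbdd (ht1.le : t ∈ cdf μ ⁻¹' Iic x)) (not_le.2 ht2)
    rw [hIic, ← ofReal_cdf, le_antisymm hle hge]

end Part2

section Part1
open List

lemma sorted_le_of_le {L : List ℝ} (hL : L.Pairwise (· ≤ ·)) {i j : ℕ}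
    (hij : j ≤ i) (hi : i < L.length) : L[j]'(lt_of_le_of_lt hij hi) ≤ L[i] := by
  rcases eq_or_lt_of_le hij with h | h
  · subst h; exact le_rfl
  · exact hL.rel_get_of_lt (a := ⟨j, lt_of_le_of_lt hij hi⟩) (b := ⟨i, hi⟩) h

lemma sorted_count_iff {p : ℝ → Prop} [DecidablePred p]
    (hp : ∀ a b : ℝ, a ≤ b → p b → p a) (s : Multiset ℝ) (i : ℕ)
    (hi : i < (s.sort (· ≤ ·)).length) :
    p ((s.sort (· ≤ ·))[i]) ↔ i + 1 ≤ Multiset.countP p s := by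
  set L := s.sort (· ≤ ·) with hLdef
  have hsort : L.Pairwise (· ≤ ·) := Multiset.pairwise_sort s _
  have hs : (L : Multiset ℝ) = s := Multiset.sort_eq s _
  have hce : Multiset.countP p s = L.countP (fun b => decide (p b)) := by
    rw [← hs, Multiset.coe_countP]
  rw [hce]
  constructor
  · intro hpi
    have h1 : L.countP (fun b => decide (p b)) =
        (L.take (i+1)).countP (fun b => decide (p b)) +
        (L.drop (i+1)).countP (fun b => decide (p b)) := by
      rw [← List.countP_append, List.take_append_drop]
    have h2 : (L.take (i+1)).countP (fun b => decide (p b)) = (L.take (i+1)).length := by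
      rw [List.countP_eq_length]
      intro b hb
      obtain ⟨n, hn, rfl⟩ := List.getElem_of_mem hb
      have hn' : n < i + 1 := lt_of_lt_of_le hn (by simpa using List.length_take_le (i+1) L)
      rw [List.getElem_take]
      simp only [decide_eq_true_eq]; exact hp _ _ (sorted_le_of_le hsort (Nat.lt_succ_iff.mp hn') hi) hpi
    have h3 : (L.take (i+1)).length = i + 1 := by
      rw [List.length_take]; omega
    omega
  · intro hcount
    by_contra hnp
    have h1 : L.countP (fun b => decide (p b)) =
        (L.take i).countP (fun b => decide (p b)) +
        (L.drop i).countP (fun b => decide (p b)) := by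
      rw [← List.countP_append, List.take_append_drop]
    have h2 : (L.drop i).countP (fun b => decide (p b)) = 0 := by
      rw [List.countP_eq_zero]
      intro b hb
      obtain ⟨n, hn, rfl⟩ := List.getElem_of_mem hb
      have hlen : i + n < L.length := by
        have := hn; rw [List.length_drop] at this; omega
      rw [List.getElem_drop]
      have hle : L[i] ≤ L[i + n] := sorted_le_of_le hsort (Nat.le_add_right i n) hlen
      simp only [decide_eq_true_eq]
      exact fun hpb => hnp (hp _ _ hle hpb)
    have h3 : (L.take i).countP (fun b => decide (p b)) ≤ i := by
      calc (L.take i).countP _ ≤ (L.take i).length := List.countP_le_length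
        _ ≤ i := by rw [List.length_take]; omega
    omega

end Part1

section Part3
open ENNReal
open scoped ENNReal

lemma binom_event (μ : Measure ℝ) [IsProbabilityMeasure μ] {S : Set ℝ} (hS : MeasurableSet S)
    (N m : ℕ) [DecidablePred (· ∈ S)] :
    Measure.pi (fun _ : Fin N => μ)
        {y : Fin N → ℝ | m ≤ (Finset.univ.filter fun i => y i ∈ S).card}
      = ∑ j ∈ Finset.Icc m N, (N.choose j : ℝ≥0∞) * (μ S) ^ j * (μ Sᶜ) ^ (N - j) := by
  classical
  set ET : Finset (Fin N) → Set (Fin N → ℝ) :=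
    fun T => Set.pi Set.univ (fun i => if i ∈ T then S else Sᶜ) with hET
  set 𝒯 : Finset (Finset (Fin N)) := univ.filter (fun T => m ≤ T.card) with h𝒯
  have hmem : ∀ (y : Fin N → ℝ) (T : Finset (Fin N)),
      y ∈ ET T ↔ T = univ.filter (fun i => y i ∈ S) := by
    intro y T
    simp only [hET, Set.mem_pi, Set.mem_univ, forall_true_left]
    constructor
    · intro h
      ext i
      simp only [mem_filter, mem_univ, true_and]
      constructor
      · intro hi; have := h i; rw [if_pos hi] at this; exact this
      · intro hi
        by_contra hni
        have := h i; rw [if_neg hni] at this; exact this hi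
    · rintro rfl i
      by_cases hi : y i ∈ S
      · rw [if_pos (by simpa using hi)]; exact hi
      · rw [if_neg (by simpa using hi)]; exact hi
  have hE : {y : Fin N → ℝ | m ≤ (Finset.univ.filter fun i => y i ∈ S).card}
      = ⋃ T ∈ 𝒯, ET T := by
    ext y
    simp only [Set.mem_setOf_eq, Set.mem_iUnion, h𝒯, mem_filter, mem_univ, true_and]
    constructor
    · intro h
      exact ⟨univ.filter (fun i => y i ∈ S), h, (hmem y _).2 rfl⟩
    · rintro ⟨T, hT, hy⟩
      rw [(hmem y T).1 hy] at hT
      exact hT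
  have hmeas : ∀ T : Finset (Fin N), MeasurableSet (ET T) := by
    intro T
    refine MeasurableSet.univ_pi fun i => ?_
    by_cases hi : i ∈ T
    · rw [if_pos hi]; exact hS
    · rw [if_neg hi]; exact hS.compl
  have hdisj : (↑𝒯 : Set (Finset (Fin N))).PairwiseDisjoint ET := by
    intro T hT T' hT' hne
    rw [Function.onFun, Set.disjoint_left]
    intro y hy hy'
    exact hne (((hmem y T).1 hy).trans ((hmem y T').1 hy').symm)
  rw [hE, measure_biUnion_finset hdisj (fun T _ => hmeas T)]
  have hterm : ∀ T : Finset (Fin N),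
      Measure.pi (fun _ : Fin N => μ) (ET T) = (μ S) ^ T.card * (μ Sᶜ) ^ (N - T.card) := by
    intro T
    rw [hET, Measure.pi_pi]
    have : ∀ i : Fin N, μ (if i ∈ T then S else Sᶜ) = if i ∈ T then μ S else μ Sᶜ :=
      fun i => apply_ite μ _ _ _
    rw [Finset.prod_congr rfl (fun i _ => this i), Finset.prod_ite, Finset.prod_const,
      Finset.prod_const]
    congr 2
    · exact congrArg card (by ext i; simp)
    · have h1 : univ.filter (fun i => ¬ i ∈ T) = Tᶜ := by ext i; simp
      rw [h1, Finset.card_compl, Fintype.card_fin]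
  calc ∑ T ∈ 𝒯, Measure.pi (fun _ : Fin N => μ) (ET T)
      = ∑ T ∈ 𝒯, (μ S) ^ T.card * (μ Sᶜ) ^ (N - T.card) :=
        Finset.sum_congr rfl fun T _ => hterm T
    _ = ∑ j ∈ Finset.Icc m N, ∑ T ∈ 𝒯.filter (fun T => T.card = j),
          (μ S) ^ T.card * (μ Sᶜ) ^ (N - T.card) := by
        refine (Finset.sum_fiberwise_of_maps_to ?_ _).symm
        intro T hT
        simp only [h𝒯, mem_filter, mem_univ, true_and] at hT
        exact Finset.mem_Icc.2 ⟨hT, Finset.card_le_univ T |>.trans (by simp)⟩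
    _ = ∑ j ∈ Finset.Icc m N, (N.choose j : ℝ≥0∞) * (μ S) ^ j * (μ Sᶜ) ^ (N - j) := by
        refine Finset.sum_congr rfl fun j hj => ?_
        rw [Finset.mem_Icc] at hj
        have hfil : 𝒯.filter (fun T => T.card = j) = univ.filter (fun T => T.card = j) := by
          ext T
          simp only [h𝒯, mem_filter, mem_univ, true_and]
          exact ⟨fun h => h.2, fun h => ⟨h ▸ hj.1, h⟩⟩
        rw [hfil]
        rw [Finset.sum_congr rfl (fun T hT => by
          rw [(Finset.mem_filter.1 hT).2])]
        have hpc : filter (fun T : Finset (Fin N) => T.card = j) univ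
            = Finset.powersetCard j univ := by
          rw [Finset.powersetCard_eq_filter, Finset.powerset_univ]
        rw [Finset.sum_const, hpc, Finset.card_powersetCard, Finset.card_univ,
          Fintype.card_fin, nsmul_eq_mul, mul_assoc]

end Part3

/-- Conformal Probabilistic Safety Verification Theorem: for `N`
i.i.d. samples from an atomless probability measure `μ` on `ℝ`, the random
coverage `μ((-∞, Y_{(N-k)}])` of the conformal prediction set is distributed
`Beta(N-k, k+1)`: for every `x ∈ [0,1]`, the probability that the coverage is
`≤ x` equals `∑_{j=N-k}^{N} C(N,j) x^j (1-x)^{N-j}`. -/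
theorem conformal_coverage_beta (μ : Measure ℝ) [IsProbabilityMeasure μ]
    [NullSingletonClass μ] (N k : ℕ) (hk : k < N) (x : ℝ) (hx : x ∈ Set.Icc (0 : ℝ) 1) :
    Measure.pi (fun _ : Fin N => μ)
        {Y : Fin N → ℝ | (μ (Set.Iic (orderStat k Y))).toReal ≤ x}
      = ENNReal.ofReal
          (∑ j ∈ Finset.Icc (N - k) N, (N.choose j : ℝ) * x ^ j * (1 - x) ^ (N - j)) := by
  classical
  obtain ⟨hx0, hx1⟩ := hx
  set m := N - k with hm
  have hm1 : 1 ≤ m := by omega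
  have hmN : m ≤ N := by omega
  set p : ℝ → Prop := fun t => (μ (Set.Iic t)).toReal ≤ x with hpdef
  have hp : ∀ a b : ℝ, a ≤ b → p b → p a := by
    intro a b hab hpb
    exact le_trans (ENNReal.toReal_mono (measure_ne_top μ _)
      (measure_mono (Set.Iic_subset_Iic.2 hab))) hpb
  set S : Set ℝ := {t | p t} with hSdef
  have hS : MeasurableSet S := by
    have hmono : Monotone (fun t => (μ (Set.Iic t)).toReal) := fun a b hab =>
      ENNReal.toReal_mono (measure_ne_top μ _) (measure_mono (Set.Iic_subset_Iic.2 hab))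
    exact hmono.measurable measurableSet_Iic
  -- event equality
  have hEvent : {Y : Fin N → ℝ | (μ (Set.Iic (orderStat k Y))).toReal ≤ x}
      = {Y : Fin N → ℝ | m ≤ (Finset.univ.filter fun i => Y i ∈ S).card} := by
    ext Y
    simp only [Set.mem_setOf_eq]
    have hlen : ((Multiset.map Y Finset.univ.val).sort (· ≤ ·)).length = N := by
      rw [Multiset.length_sort, Multiset.card_map]
      simp
    have hi : m - 1 < ((Multiset.map Y Finset.univ.val).sort (· ≤ ·)).length := by omega
    have hgd : orderStat k Y = ((Multiset.map Y Finset.univ.val).sort (· ≤ ·))[m-1] := by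
      rw [orderStat, ← hm, List.getD_eq_getElem _ _ hi]
    have hiff := sorted_count_iff hp (Multiset.map Y Finset.univ.val) (m-1) hi
    have hcount : Multiset.countP p (Multiset.map Y Finset.univ.val)
        = (Finset.univ.filter fun i => Y i ∈ S).card := by
      rw [Multiset.countP_map]
      rfl
    rw [show ((μ (Set.Iic (orderStat k Y))).toReal ≤ x) = p (orderStat k Y) from rfl, hgd,
      hiff, hcount]
    have : m - 1 + 1 = m := by omega
    rw [this]
  rw [hEvent, binom_event μ hS N m]
  have hμS : μ S = ENNReal.ofReal x := measure_cdf_le μ hx0 hx1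
  have hμSc : μ Sᶜ = ENNReal.ofReal (1 - x) := by
    rw [measure_compl hS (measure_ne_top μ S), hμS, measure_univ,
      ENNReal.ofReal_sub 1 hx0, ENNReal.ofReal_one]
  rw [hμS, hμSc, ENNReal.ofReal_sum_of_nonneg (fun j _ => mul_nonneg (mul_nonneg (Nat.cast_nonneg _) (pow_nonneg hx0 _)) (pow_nonneg (by linarith) _))]
  refine Finset.sum_congr rfl fun j _ => ?_
  rw [ENNReal.ofReal_mul (by positivity), ENNReal.ofReal_mul (by positivity),
    ENNReal.ofReal_pow hx0, ENNReal.ofReal_pow (by linarith), ENNReal.ofReal_natCast]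
end

section
/- Let μ be an atomless probability measure on ℝ, let Y_1,…,Y_N be i.i.d. random variables with law μ, let k be a natural number with k < N, let Y_{(N−k)} denote the (N−k)-th order statistic of Y_1,…,Y_N, and let ε, β ∈ (0,1) satisfy ∑_{i=0}^{k} C(N,i) · ε^i · (1−ε)^{N−i} ≤ β. Then the probability under the product measure μ^⊗N that μ({y : y > Y_{(N−k)}}) > ε is at most β; that is, with probability at least 1−β over the calibration sample, the conformal prediction set {y : y ≤ Y_{(N−k)}} has coverage at least 1−ε. (Conformal Probabilistic Safety Verification Lemma / scenario form of split conformal prediction.) -/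
open MeasureTheory Finset ProbabilityTheory Filter

lemma list_count_le {l : List ℝ} (hl : l.Pairwise (· ≤ ·)) {N k : ℕ} (hlen : l.length = N)
    (hk : k < N) {t : ℝ} (h : l.getD (N - k - 1) 0 < t) :
    l.countP (fun x => decide (t ≤ x)) ≤ k := by
  set p : ℝ → Bool := fun x => decide (t ≤ x) with hp
  have hmlt : N - k - 1 < l.length := by omega
  have hget : l.getD (N - k - 1) 0 = l.get ⟨N - k - 1, hmlt⟩ := by
    simp [List.getD_eq_getElem?_getD, List.getElem?_eq_getElem hmlt]
  rw [hget] at h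
  have hsplit := List.take_append_drop (N - k) l
  have hcount : l.countP p = (l.take (N - k)).countP p + (l.drop (N - k)).countP p := by
    conv_lhs => rw [← hsplit]
    rw [List.countP_append]
  have h1 : (l.take (N - k)).countP p = 0 := by
    rw [List.countP_eq_zero]
    intro x hx
    rw [List.mem_take_iff_getElem] at hx
    obtain ⟨i, hi, rfl⟩ := hx
    have hiN : i < l.length := lt_of_lt_of_le hi (min_le_right _ _)
    have hile : i ≤ N - k - 1 := by omega
    have := hl.rel_get_of_le (a := ⟨i, hiN⟩) (b := ⟨N - k - 1, hmlt⟩) hile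
    simp only [hp, decide_eq_true_eq]
    push_neg
    calc l[i] = l.get ⟨i, hiN⟩ := rfl
    _ ≤ _ := this
    _ < t := h
  have h2 : (l.drop (N - k)).countP p ≤ (l.drop (N - k)).length := List.countP_le_length
  rw [List.length_drop, hlen] at h2
  omega

lemma card_filter_le {N k : ℕ} (hk : k < N) (y : Fin N → ℝ) {t : ℝ}
    (h : orderStat k y < t) :
    (Finset.univ.filter fun i => t ≤ y i).card ≤ k := by
  set l : List ℝ := (Multiset.map y Finset.univ.val).sort (· ≤ ·) with hl
  have hlen : l.length = N := by
    simp [hl]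
  have hsorted : l.Pairwise (· ≤ ·) := Multiset.pairwise_sort _ _
  have hcount := list_count_le hsorted hlen hk h
  have : (Finset.univ.filter fun i => t ≤ y i).card
      = l.countP (fun x => decide (t ≤ x)) := by
    have h1 : (l.countP (fun x => decide (t ≤ x)) : ℕ)
        = Multiset.countP (fun x => t ≤ x) (Multiset.map y Finset.univ.val) := by
      rw [← Multiset.sort_eq (Multiset.map y Finset.univ.val) (· ≤ ·), ← hl]
      rfl
    rw [h1, Multiset.countP_map, ← Finset.filter_val, ← Finset.card_def]
  omega

lemma binom_measure (μ : Measure ℝ) [IsProbabilityMeasure μ] (t : ℝ) (N k : ℕ) :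
    Measure.pi (fun _ : Fin N => μ) {Y : Fin N → ℝ | (Finset.univ.filter fun i => t ≤ Y i).card ≤ k}
      = ∑ i ∈ Finset.range (k + 1),
          (N.choose i : ENNReal) * μ (Set.Ici t) ^ i * μ (Set.Iio t) ^ (N - i) := by
  classical
  set A : Finset (Fin N) → Set (Fin N → ℝ) :=
    fun s => Set.univ.pi (fun i => if i ∈ s then Set.Ici t else Set.Iio t) with hA
  have hmemA : ∀ s (Y : Fin N → ℝ), Y ∈ A s ↔ (Finset.univ.filter fun i => t ≤ Y i) = s := by
    intro s Y
    simp only [hA, Set.mem_pi, Set.mem_univ, forall_true_left]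
    constructor
    · intro h
      ext i
      simp only [mem_filter, mem_univ, true_and]
      have := h i
      by_cases hi : i ∈ s <;> simp [hi] at this ⊢
      · exact this
      · exact this
    · rintro rfl i
      by_cases hi : t ≤ Y i <;> simp [hi]
      exact not_le.1 hi
  have hE : {Y : Fin N → ℝ | (Finset.univ.filter fun i => t ≤ Y i).card ≤ k}
      = ⋃ s ∈ Finset.univ.filter (fun s : Finset (Fin N) => s.card ≤ k), A s := by
    ext Y
    simp only [Set.mem_setOf_eq, Set.mem_iUnion, mem_filter, mem_univ, true_and]
    constructor
    · intro h
      exact ⟨_, h, (hmemA _ Y).2 rfl⟩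
    · rintro ⟨s, hs, hY⟩
      rw [(hmemA s Y).1 hY] at *
      exact hs
  have hdisj : Set.PairwiseDisjoint
      ((Finset.univ.filter (fun s : Finset (Fin N) => s.card ≤ k)) : Set (Finset (Fin N))) A := by
    intro s _ s' _ hne
    refine Set.disjoint_left.2 fun Y hY hY' => hne ?_
    rw [← (hmemA s Y).1 hY, ← (hmemA s' Y).1 hY']
  have hmeas : ∀ s ∈ Finset.univ.filter (fun s : Finset (Fin N) => s.card ≤ k),
      MeasurableSet (A s) := by
    intro s _
    refine MeasurableSet.pi Set.countable_univ fun i _ => ?_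
    by_cases hi : i ∈ s <;> simp [hi, measurableSet_Ici, measurableSet_Iio]
  have hAs : ∀ s : Finset (Fin N),
      Measure.pi (fun _ : Fin N => μ) (A s) = μ (Set.Ici t) ^ s.card * μ (Set.Iio t) ^ (N - s.card) := by
    intro s
    rw [hA, Measure.pi_pi]
    rw [← Finset.prod_mul_prod_compl s]
    have h1 : ∀ i ∈ s, μ (if i ∈ s then Set.Ici t else Set.Iio t) = μ (Set.Ici t) :=
      fun i hi => by rw [if_pos hi]
    have h2 : ∀ i ∈ sᶜ, μ (if i ∈ s then Set.Ici t else Set.Iio t) = μ (Set.Iio t) :=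
      fun i hi => by rw [if_neg (Finset.mem_compl.1 hi)]
    rw [Finset.prod_congr rfl h1, Finset.prod_congr rfl h2, Finset.prod_const,
      Finset.prod_const, Finset.card_compl, Fintype.card_fin]
  rw [hE, measure_biUnion_finset hdisj hmeas]
  have hsplit : Finset.univ.filter (fun s : Finset (Fin N) => s.card ≤ k)
      = (Finset.range (k + 1)).biUnion (fun i => Finset.univ.powersetCard i) := by
    ext s
    simp [Finset.mem_powersetCard, Nat.lt_succ_iff]
  rw [hsplit, Finset.sum_biUnion]
  · refine Finset.sum_congr rfl fun i _ => ?_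
    rw [Finset.sum_congr rfl (fun s hs => ?_), Finset.sum_const,
      Finset.card_powersetCard, Finset.card_univ, Fintype.card_fin, nsmul_eq_mul, mul_assoc]
    · rw [hAs s]
      rw [(Finset.mem_powersetCard.1 hs).2]
  · intro i hi j hj hij
    refine Finset.disjoint_left.2 fun s hs hs' => hij ?_
    rw [← (Finset.mem_powersetCard.1 hs).2, ← (Finset.mem_powersetCard.1 hs').2]

lemma exists_quantile (μ : Measure ℝ) [IsProbabilityMeasure μ] [NullSingletonClass μ] {ε : ℝ}
    (hε : ε ∈ Set.Ioo (0 : ℝ) 1) :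
    ∃ t : ℝ, μ (Set.Ioi t) = ENNReal.ofReal ε ∧ μ (Set.Ici t) = ENNReal.ofReal ε
      ∧ μ (Set.Iio t) = ENNReal.ofReal (1 - ε) := by
  set f : ℝ → ℝ := fun x => cdf μ x with hf
  have hmono : Monotone f := (cdf μ).mono
  have hcont : Continuous f := by
    rw [continuous_iff_continuousAt]
    intro x
    rw [hmono.continuousAt_iff_leftLim_eq_rightLim]
    have hsing : (cdf μ).measure {x} = 0 := by
      rw [measure_cdf]; exact measure_singleton x
    rw [StieltjesFunction.measure_singleton] at hsing
    have hle : Function.leftLim f x ≤ f x := hmono.leftLim_le le_rfl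
    have : f x - Function.leftLim f x ≤ 0 := by
      by_contra hpos
      push_neg at hpos
      exact (ENNReal.ofReal_pos.2 hpos).ne' hsing
    have hleft : Function.leftLim f x = f x := le_antisymm hle (by linarith)
    have hright : Function.rightLim f x = f x := by
      refine rightLim_eq_of_tendsto ?_
      have := (cdf μ).right_continuous x
      exact this.tendsto.mono_left (nhdsWithin_mono x Set.Ioi_subset_Ici_self)
    rw [hleft, hright]
  obtain ⟨a, ha⟩ : ∃ a, f a < 1 - ε :=
    ((tendsto_cdf_atBot μ).eventually_lt_const (by linarith [hε.2])).exists
  obtain ⟨b, hb⟩ : ∃ b, 1 - ε < f b :=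
    ((tendsto_cdf_atTop μ).eventually_const_lt (by linarith [hε.1])).exists
  have hab : a ≤ b := by
    by_contra hba
    push_neg at hba
    exact absurd (hmono hba.le) (by linarith)
  obtain ⟨t, -, ht⟩ := intermediate_value_Icc hab hcont.continuousOn
    ⟨ha.le, hb.le⟩
  have hIic : μ (Set.Iic t) = ENNReal.ofReal (1 - ε) := by
    rw [← ofReal_cdf]
    exact congrArg ENNReal.ofReal ht
  have hIio : μ (Set.Iio t) = ENNReal.ofReal (1 - ε) := by
    rw [← hIic, ← measure_congr (Iio_ae_eq_Iic (μ := μ) (a := t))]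
  have hIoi : μ (Set.Ioi t) = ENNReal.ofReal ε := by
    rw [← Set.compl_Iic, measure_compl measurableSet_Iic (measure_ne_top μ _), hIic,
      measure_univ]
    rw [show (1 : ENNReal) = ENNReal.ofReal ε + ENNReal.ofReal (1 - ε) by
      rw [← ENNReal.ofReal_add hε.1.le (by linarith [hε.2])]; norm_num]
    rw [ENNReal.add_sub_cancel_right ENNReal.ofReal_ne_top]
  refine ⟨t, hIoi, ?_, hIio⟩
  rw [← hIoi, measure_congr (Ioi_ae_eq_Ici (μ := μ) (a := t))]

/-- Conformal Probabilistic Safety Verification Lemma / scenario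
form of split conformal prediction: for `N` i.i.d. samples from an atomless
probability measure `μ` on `ℝ` and `ε, β ∈ (0,1)` with
`∑_{i=0}^{k} C(N,i) ε^i (1-ε)^{N-i} ≤ β`, the probability that the conformal
prediction set `{y : y ≤ Y_{(N-k)}}` has coverage less than `1-ε` (i.e. that
`μ{y : y > Y_{(N-k)}} > ε`) is at most `β`. -/
theorem conformal_scenario_guarantee (μ : Measure ℝ) [IsProbabilityMeasure μ]
    [NullSingletonClass μ] (N k : ℕ) (hk : k < N) (ε β : ℝ)
    (hε : ε ∈ Set.Ioo (0 : ℝ) 1) (hβ : β ∈ Set.Ioo (0 : ℝ) 1)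
    (hcond : ∑ i ∈ Finset.range (k + 1),
        (N.choose i : ℝ) * ε ^ i * (1 - ε) ^ (N - i) ≤ β) :
    Measure.pi (fun _ : Fin N => μ)
        {Y : Fin N → ℝ | ENNReal.ofReal ε < μ {y : ℝ | orderStat k Y < y}}
      ≤ ENNReal.ofReal β := by
  obtain ⟨t, hIoi, hIci, hIio⟩ := exists_quantile μ hε
  have hsub : {Y : Fin N → ℝ | ENNReal.ofReal ε < μ {y : ℝ | orderStat k Y < y}}
      ⊆ {Y : Fin N → ℝ | (Finset.univ.filter fun i => t ≤ Y i).card ≤ k} := by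
    intro Y hY
    simp only [Set.mem_setOf_eq] at hY ⊢
    have hlt : orderStat k Y < t := by
      by_contra hge
      push_neg at hge
      have : μ {y : ℝ | orderStat k Y < y} ≤ μ (Set.Ioi t) :=
        measure_mono fun y hy => lt_of_le_of_lt hge hy
      rw [hIoi] at this
      exact absurd (lt_of_lt_of_le hY this) (lt_irrefl _)
    exact card_filter_le hk Y hlt
  calc Measure.pi (fun _ : Fin N => μ)
        {Y : Fin N → ℝ | ENNReal.ofReal ε < μ {y : ℝ | orderStat k Y < y}}
      ≤ Measure.pi (fun _ : Fin N => μ)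
        {Y : Fin N → ℝ | (Finset.univ.filter fun i => t ≤ Y i).card ≤ k} :=
        measure_mono hsub
    _ = ∑ i ∈ Finset.range (k + 1),
          (N.choose i : ENNReal) * μ (Set.Ici t) ^ i * μ (Set.Iio t) ^ (N - i) :=
        binom_measure μ t N k
    _ = ENNReal.ofReal (∑ i ∈ Finset.range (k + 1),
          (N.choose i : ℝ) * ε ^ i * (1 - ε) ^ (N - i)) := by
        have h0 : (0:ℝ) ≤ ε := hε.1.le
        have h1 : (0:ℝ) ≤ 1 - ε := by linarith [hε.2]
        rw [ENNReal.ofReal_sum_of_nonneg (fun i _ =>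
          mul_nonneg (mul_nonneg (Nat.cast_nonneg _) (pow_nonneg h0 _)) (pow_nonneg h1 _))]
        refine Finset.sum_congr rfl fun i _ => ?_
        rw [hIci, hIio,
          ENNReal.ofReal_mul (mul_nonneg (Nat.cast_nonneg _) (pow_nonneg h0 _)),
          ENNReal.ofReal_mul (Nat.cast_nonneg _),
          ENNReal.ofReal_pow hε.1.le, ENNReal.ofReal_pow (by linarith [hε.2]),
          ENNReal.ofReal_natCast]
    _ ≤ ENNReal.ofReal β := ENNReal.ofReal_le_ofReal hcond
end

section
/- Let Y_1,…,Y_N, Y_{N+1} be i.i.d. real-valued random variables (with arbitrary common law, not necessarily atomless), let k be a natural number with k < N, and let Y_{(N−k)} denote the (N−k)-th order statistic of the first N variables Y_1,…,Y_N. Then P(Y_{N+1} ≤ Y_{(N−k)}) ≥ (N−k)/(N+1). Moreover, if the common law is atomless, then P(Y_{N+1} ≤ Y_{(N−k)}) = (N−k)/(N+1). -/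
open MeasureTheory Finset
open scoped ENNReal NNReal

section Aux


lemma sorted_getD_le_iff (l : List ℝ) (hs : l.Pairwise (· ≤ ·)) (m : ℕ)
    (hm : m < l.length) (t : ℝ) :
    t ≤ l.getD m 0 ↔ l.length - m ≤ l.countP (fun x => decide (t ≤ x)) := by
  have hrel : ∀ i j (hi : i < l.length) (hj : j < l.length), i ≤ j → l[i] ≤ l[j] := by
    intro i j hi hj hij
    rcases eq_or_lt_of_le hij with h | h
    · subst h; rfl
    · exact List.pairwise_iff_getElem.mp hs i j hi hj h
  rw [List.getD_eq_getElem l 0 hm]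
  constructor
  · intro ht
    have hsplit : l.countP (fun x => decide (t ≤ x)) =
        (l.take m).countP (fun x => decide (t ≤ x)) +
        (l.drop m).countP (fun x => decide (t ≤ x)) := by
      conv_lhs => rw [← List.take_append_drop m l]
      rw [List.countP_append]
    have hdrop : (l.drop m).countP (fun x => decide (t ≤ x)) = (l.drop m).length := by
      rw [List.countP_eq_length]
      intro a ha
      rw [List.mem_iff_getElem] at ha
      obtain ⟨p, hp, rfl⟩ := ha
      rw [List.getElem_drop]
      simp only [decide_eq_true_eq]
      exact le_trans ht (hrel m (m + p) hm (by rw [List.length_drop] at hp; omega) (by omega))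
    rw [hsplit, hdrop, List.length_drop]
    omega
  · intro hc
    by_contra ht
    push_neg at ht
    have hsplit : l.countP (fun x => decide (t ≤ x)) =
        (l.take (m+1)).countP (fun x => decide (t ≤ x)) +
        (l.drop (m+1)).countP (fun x => decide (t ≤ x)) := by
      conv_lhs => rw [← List.take_append_drop (m+1) l]
      rw [List.countP_append]
    have htake : (l.take (m+1)).countP (fun x => decide (t ≤ x)) = 0 := by
      rw [List.countP_eq_zero]
      intro a ha
      rw [List.mem_iff_getElem] at ha
      obtain ⟨p, hp, rfl⟩ := ha
      have hp' : p < m + 1 := by rw [List.length_take] at hp; omega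
      rw [List.getElem_take]
      simp only [decide_eq_true_eq]
      push_neg
      exact lt_of_le_of_lt (hrel p m (by omega) hm (by omega)) ht
    have hle := List.countP_le_length (p := fun x => decide (t ≤ x)) (l := l.drop (m+1))
    rw [List.length_drop] at hle
    rw [hsplit, htake] at hc
    omega
lemma le_orderStat_iff {N k : ℕ} (hk : k < N) (y : Fin N → ℝ) (t : ℝ) :
    t ≤ orderStat k y ↔ k + 1 ≤ (univ.filter fun i => t ≤ y i).card := by
  classical
  set l := ((Multiset.map y Finset.univ.val).sort (· ≤ ·)) with hl
  have hlen : l.length = N := by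
    rw [hl, Multiset.length_sort, Multiset.card_map]
    simp
  have hs : l.Pairwise (· ≤ ·) := Multiset.pairwise_sort _ _
  have hm : N - k - 1 < l.length := by omega
  rw [orderStat, ← hl, sorted_getD_le_iff l hs _ hm t, hlen]
  have hcount : l.countP (fun x => decide (t ≤ x)) =
      (univ.filter fun i => t ≤ y i).card := by
    have : (l : Multiset ℝ) = Multiset.map y Finset.univ.val := Multiset.sort_eq _ _
    calc l.countP (fun x => decide (t ≤ x))
        = Multiset.countP (fun x => t ≤ x) (l : Multiset ℝ) := by
          simp [Multiset.coe_countP]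
      _ = Multiset.countP (fun x => t ≤ x) (Multiset.map y Finset.univ.val) := by rw [this]
      _ = Multiset.card (Finset.univ.val.filter fun i => t ≤ y i) := by
          rw [Multiset.countP_map]
      _ = (univ.filter fun i => t ≤ y i).card := rfl
  rw [hcount]
  omega

variable {ι : Type*} [Fintype ι] [DecidableEq ι]

/-- number of indices `i ≠ j` with `Y i ≥ Y j`. -/
noncomputable def cnt (Y : ι → ℝ) (j : ι) : ℕ := (univ.filter fun i => i ≠ j ∧ Y j ≤ Y i).card

lemma comb_lower (Y : ι → ℝ) (k : ℕ) :
    Fintype.card ι - (k + 1) ≤ (univ.filter fun j => k + 1 ≤ cnt Y j).card := by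
  classical
  have htot := Finset.card_filter_add_card_filter_not
    (s := (univ : Finset ι)) (p := fun j => k + 1 ≤ cnt Y j)
  set S := univ.filter fun j => ¬ (k + 1 ≤ cnt Y j) with hS
  have hcard : S.card ≤ k + 1 := by
    rcases S.eq_empty_or_nonempty with h | h
    · simp [h]
    · obtain ⟨j0, hj0, hmin⟩ := S.exists_min_image Y h
      have hsub : S.erase j0 ⊆ univ.filter fun i => i ≠ j0 ∧ Y j0 ≤ Y i := by
        intro i hi
        rw [Finset.mem_erase] at hi
        simp only [Finset.mem_filter, Finset.mem_univ, true_and]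
        exact ⟨hi.1, hmin i hi.2⟩
      have h1 : S.card - 1 ≤ cnt Y j0 := by
        have := Finset.card_le_card hsub
        rw [Finset.card_erase_of_mem hj0] at this
        exact this
      have h2 : ¬ (k + 1 ≤ cnt Y j0) := by
        rw [hS, Finset.mem_filter] at hj0; exact hj0.2
      have h3 : 1 ≤ S.card := Finset.card_pos.mpr h
      omega
  rw [Finset.card_univ] at htot
  omega

lemma cnt_lt_card (Y : ι → ℝ) (j : ι) : cnt Y j < Fintype.card ι := by
  classical
  have hsub : (univ.filter fun i => i ≠ j ∧ Y j ≤ Y i) ⊆ univ.erase j := by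
    intro i hi
    rw [Finset.mem_filter] at hi
    exact Finset.mem_erase.mpr ⟨hi.2.1, Finset.mem_univ i⟩
  have := Finset.card_le_card hsub
  rw [Finset.card_erase_of_mem (Finset.mem_univ j), Finset.card_univ] at this
  have hpos : 0 < Fintype.card ι := Fintype.card_pos_iff.mpr ⟨j⟩
  unfold cnt
  omega

lemma cnt_strict_anti (Y : ι → ℝ) {j j' : ι} (h : Y j < Y j') : cnt Y j' < cnt Y j := by
  classical
  apply Finset.card_lt_card
  rw [Finset.ssubset_iff_of_subset]
  · refine ⟨j', ?_, ?_⟩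
    · simp only [Finset.mem_filter, Finset.mem_univ, true_and]
      exact ⟨fun he => absurd (he ▸ h) (lt_irrefl _), le_of_lt h⟩
    · simp only [Finset.mem_filter, Finset.mem_univ, true_and, not_and]
      intro hne; exact absurd rfl hne
  · intro i hi
    rw [Finset.mem_filter] at hi ⊢
    refine ⟨Finset.mem_univ i, ?_, le_of_lt (lt_of_lt_of_le h hi.2.2)⟩
    intro he
    exact absurd (he ▸ lt_of_lt_of_le h hi.2.2) (lt_irrefl _)

lemma comb_upper (Y : ι → ℝ) (hY : Function.Injective Y) (k : ℕ) :
    (univ.filter fun j => k + 1 ≤ cnt Y j).card ≤ Fintype.card ι - (k + 1) := by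
  classical
  have := Finset.card_le_card_of_injOn (cnt Y)
    (s := univ.filter fun j => k + 1 ≤ cnt Y j)
    (t := Finset.Ico (k + 1) (Fintype.card ι))
    (fun j hj => by
      rw [Finset.mem_coe, Finset.mem_filter] at hj
      exact Finset.mem_coe.mpr (Finset.mem_Ico.mpr ⟨hj.2, cnt_lt_card Y j⟩))
    (by
      intro a _ b _ hab
      by_contra hne
      rcases lt_or_gt_of_ne (fun h : Y a = Y b => hne (hY h)) with h | h
      · exact absurd hab (cnt_strict_anti Y h).ne'
      · exact absurd hab (cnt_strict_anti Y (show Y b < Y a from h)).ne)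
  rwa [Nat.card_Ico] at this
lemma cnt_comp (Y : ι → ℝ) (σ : Equiv.Perm ι) (j : ι) :
    cnt (Y ∘ σ) j = cnt Y (σ j) := by
  classical
  unfold cnt
  apply Finset.card_bij (fun i _ => σ i)
  · intro i hi
    rw [Finset.mem_filter] at hi ⊢
    exact ⟨Finset.mem_univ _, fun h => hi.2.1 (σ.injective h), hi.2.2⟩
  · intro a _ b _ hab
    exact σ.injective hab
  · intro i' hi'
    rw [Finset.mem_filter] at hi'
    refine ⟨σ.symm i', ?_, by simp⟩
    rw [Finset.mem_filter]
    refine ⟨Finset.mem_univ _, fun h => hi'.2.1 ?_, by simpa using hi'.2.2⟩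
    · rw [← h]; simp
  
lemma cnt_last {N : ℕ} (Y : Fin (N + 1) → ℝ) :
    (univ.filter fun i : Fin N => Y (Fin.last N) ≤ Y i.castSucc).card
      = cnt Y (Fin.last N) := by
  classical
  unfold cnt
  apply Finset.card_bij (fun i _ => Fin.castSucc i)
  · intro i hi
    rw [Finset.mem_filter] at hi ⊢
    exact ⟨Finset.mem_univ _, (Fin.castSucc_lt_last i).ne, hi.2⟩
  · intro a _ b _ hab
    exact Fin.castSucc_injective _ hab
  · intro i' hi'
    rw [Finset.mem_filter] at hi'
    have hlt : (i' : ℕ) < N := by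
      rcases Fin.lt_or_eq_of_le (Fin.le_last i') with h | h
      · exact h
      · exact absurd h hi'.2.1
    refine ⟨⟨i', hlt⟩, ?_, rfl⟩
    rw [Finset.mem_filter]
    exact ⟨Finset.mem_univ _, hi'.2.2⟩
lemma measurable_E (k : ℕ) (j : ι) : MeasurableSet {Y : ι → ℝ | k + 1 ≤ cnt Y j} := by
  classical
  have : (fun Y : ι → ℝ => cnt Y j) = fun Y =>
      ∑ i : ι, if (i ≠ j ∧ Y j ≤ Y i) then 1 else 0 := by
    funext Y; rw [cnt, Finset.card_filter]
  have hmeas : Measurable fun Y : ι → ℝ => cnt Y j := by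
    rw [this]
    apply Finset.measurable_sum
    intro i _
    by_cases hij : i = j
    · simp [hij]
    · have : (fun Y : ι → ℝ => if (i ≠ j ∧ Y j ≤ Y i) then (1:ℕ) else 0)
          = fun Y => if Y j ≤ Y i then 1 else 0 := by
        funext Y; simp [hij]
      rw [this]
      exact Measurable.ite (measurableSet_le (measurable_pi_apply j) (measurable_pi_apply i))
        measurable_const measurable_const
  exact hmeas measurableSet_Ici

lemma map_pair (μ : Measure ℝ) [IsProbabilityMeasure μ] {i j : ι} (hij : i ≠ j) :
    Measure.map (fun Y : ι → ℝ => (Y i, Y j)) (Measure.pi fun _ : ι => μ) = μ.prod μ := by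
  classical
  have hT : Measurable fun Y : ι → ℝ => (Y i, Y j) :=
    (measurable_pi_apply i).prodMk (measurable_pi_apply j)
  refine (Measure.prod_eq fun s t hs ht => ?_).symm
  rw [Measure.map_apply hT (hs.prod ht)]
  have hset : (fun Y : ι → ℝ => (Y i, Y j)) ⁻¹' (s ×ˢ t)
      = Set.pi Set.univ (Function.update (Function.update (fun _ : ι => Set.univ) i s) j t) := by
    ext Y
    simp only [Set.mem_preimage, Set.mem_prod, Set.mem_pi, Set.mem_univ, true_imp_iff]
    constructor
    · rintro ⟨h1, h2⟩ l
      rcases eq_or_ne l j with rfl | hlj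
      · simpa [Function.update_self]
      · rcases eq_or_ne l i with rfl | hli
        · simpa [Function.update_of_ne hij, Function.update_self]
        · simp [Function.update_of_ne hlj, Function.update_of_ne hli]
    · intro h
      constructor
      · have := h i; simpa [Function.update_of_ne hij, Function.update_self] using this
      · have := h j; simpa [Function.update_self] using this
  rw [hset, Measure.pi_pi]
  have hprod : ∀ l ∈ (univ : Finset ι),
      l ∉ ({i, j} : Finset ι) →
      μ (Function.update (Function.update (fun _ : ι => Set.univ) i s) j t l) = 1 := by
    intro l _ hl
    simp only [Finset.mem_insert, Finset.mem_singleton, not_or] at hl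
    rw [Function.update_of_ne hl.2, Function.update_of_ne hl.1]
    simp
  rw [← Finset.prod_subset (Finset.subset_univ ({i, j} : Finset ι)) hprod,
    Finset.prod_pair hij]
  rw [Function.update_of_ne hij, Function.update_self, Function.update_self]

lemma null_eq (μ : Measure ℝ) [IsProbabilityMeasure μ] [NullSingletonClass μ] {i j : ι} (hij : i ≠ j) :
    (Measure.pi fun _ : ι => μ) {Y : ι → ℝ | Y i = Y j} = 0 := by
  have hT : Measurable fun Y : ι → ℝ => (Y i, Y j) :=
    (measurable_pi_apply i).prodMk (measurable_pi_apply j)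
  have hdiag : MeasurableSet (Set.diagonal ℝ) := isClosed_diagonal.measurableSet
  have : {Y : ι → ℝ | Y i = Y j} = (fun Y : ι → ℝ => (Y i, Y j)) ⁻¹' Set.diagonal ℝ := by
    ext Y; simp [Set.diagonal, eq_comm]
  rw [this, ← Measure.map_apply hT hdiag, map_pair μ hij,
    Measure.prod_apply hdiag]
  have : ∀ x : ℝ, (Prod.mk x ⁻¹' Set.diagonal ℝ) = {x} := by
    intro x; ext y; simp [Set.diagonal, eq_comm]
  simp [this]

lemma exchange (μ : Measure ℝ) [IsProbabilityMeasure μ] (k : ℕ) (j j' : ι) :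
    (Measure.pi fun _ : ι => μ) {Y : ι → ℝ | k + 1 ≤ cnt Y j}
      = (Measure.pi fun _ : ι => μ) {Y : ι → ℝ | k + 1 ≤ cnt Y j'} := by
  classical
  set σ : Equiv.Perm ι := Equiv.swap j j' with hσ
  have hmp : MeasurePreserving (MeasurableEquiv.piCongrLeft (fun _ : ι => ℝ) σ)
      (Measure.pi fun _ => μ) (Measure.pi fun _ => μ) :=
    measurePreserving_piCongrLeft (fun _ => μ) σ
  have hmp2 := hmp.symm _
  have hfun : ∀ Y : ι → ℝ,
      ⇑(MeasurableEquiv.piCongrLeft (fun _ : ι => ℝ) σ).symm Y = Y ∘ σ := by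
    intro Y; funext a
    simp [MeasurableEquiv.piCongrLeft]
  have hpre : ⇑(MeasurableEquiv.piCongrLeft (fun _ : ι => ℝ) σ).symm ⁻¹'
      {Y : ι → ℝ | k + 1 ≤ cnt Y j} = {Y : ι → ℝ | k + 1 ≤ cnt Y j'} := by
    ext Y
    simp only [Set.mem_preimage, Set.mem_setOf_eq, hfun, cnt_comp]
    rw [hσ]
    simp [Equiv.swap_apply_left]
  rw [← hpre, hmp2.measure_preimage (measurable_E k j).nullMeasurableSet]

end Aux

/-- marginal coverage property of split conformal prediction:
for `N+1` i.i.d. real random variables with common law `μ`, letting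
`Y_{(N-k)}` be the `(N-k)`-th order statistic of the first `N` of them,
`P(Y_{N+1} ≤ Y_{(N-k)})  ≥ (N-k)/(N+1)`; moreover if `μ` is atomless then
`P(Y_{N+1} ≤ Y_{(N-k)}) = (N-k)/(N+1)`. -/
theorem conformal_marginal_coverage (μ : Measure ℝ) [IsProbabilityMeasure μ]
    (N k : ℕ) (hk : k < N) :
    ENNReal.ofReal (((N : ℝ) - k) / ((N : ℝ) + 1)) ≤
      Measure.pi (fun _ : Fin (N + 1) => μ)
        {Y : Fin (N + 1) → ℝ |
          Y (Fin.last N) ≤ orderStat k (fun i : Fin N => Y i.castSucc)} ∧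
    (NoAtoms μ →
      Measure.pi (fun _ : Fin (N + 1) => μ)
        {Y : Fin (N + 1) → ℝ |
          Y (Fin.last N) ≤ orderStat k (fun i : Fin N => Y i.castSucc)}
      = ENNReal.ofReal (((N : ℝ) - k) / ((N : ℝ) + 1))) := by
  classical
  set ν := Measure.pi (fun _ : Fin (N + 1) => μ) with hν
  have hset : {Y : Fin (N + 1) → ℝ |
      Y (Fin.last N) ≤ orderStat k (fun i : Fin N => Y i.castSucc)}
      = {Y : Fin (N + 1) → ℝ | k + 1 ≤ cnt Y (Fin.last N)} := by
    ext Y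
    simp only [Set.mem_setOf_eq]
    rw [le_orderStat_iff hk, cnt_last]
  have hcardfin : Fintype.card (Fin (N + 1)) = N + 1 := Fintype.card_fin _
  have hsum : ∀ Y : Fin (N + 1) → ℝ,
      (∑ j, ({Z : Fin (N + 1) → ℝ | k + 1 ≤ cnt Z j}).indicator
        (fun _ => (1 : ℝ≥0∞)) Y)
      = ((univ.filter fun j => k + 1 ≤ cnt Y j).card : ℝ≥0∞) := by
    intro Y
    rw [Finset.card_filter]
    push_cast
    refine Finset.sum_congr rfl fun j _ => ?_
    by_cases h : k + 1 ≤ cnt Y j <;> simp [Set.indicator_apply, h] <;> omega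
  have hint : ∑ j, ν {Y : Fin (N + 1) → ℝ | k + 1 ≤ cnt Y j}
      = ∫⁻ Y, ((univ.filter fun j => k + 1 ≤ cnt Y j).card : ℝ≥0∞) ∂ν := by
    calc ∑ j, ν {Y : Fin (N + 1) → ℝ | k + 1 ≤ cnt Y j}
        = ∑ j, ∫⁻ Y, ({Z : Fin (N + 1) → ℝ | k + 1 ≤ cnt Z j}).indicator
            (fun _ => (1 : ℝ≥0∞)) Y ∂ν := by
          refine Finset.sum_congr rfl fun j _ => ?_
          exact (lintegral_indicator_one (measurable_E k j)).symm
      _ = ∫⁻ Y, ∑ j, ({Z : Fin (N + 1) → ℝ | k + 1 ≤ cnt Z j}).indicator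
            (fun _ => (1 : ℝ≥0∞)) Y ∂ν :=
          (lintegral_finset_sum _ fun j _ =>
            measurable_const.indicator (measurable_E k j)).symm
      _ = _ := by simp_rw [hsum]
  have htot : ∑ j, ν {Y : Fin (N + 1) → ℝ | k + 1 ≤ cnt Y j}
      = ((N + 1 : ℕ) : ℝ≥0∞) * ν {Y : Fin (N + 1) → ℝ | k + 1 ≤ cnt Y (Fin.last N)} := by
    rw [Finset.sum_congr rfl fun j _ => exchange μ k j (Fin.last N),
      Finset.sum_const, Finset.card_univ, hcardfin, nsmul_eq_mul]
  have hofReal : ENNReal.ofReal (((N : ℝ) - k) / ((N : ℝ) + 1))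
      = ((N - k : ℕ) : ℝ≥0∞) / ((N + 1 : ℕ) : ℝ≥0∞) := by
    rw [ENNReal.ofReal_div_of_pos (by positivity)]
    congr 1
    · rw [show ((N : ℝ) - k) = ((N - k : ℕ) : ℝ) by
        rw [Nat.cast_sub hk.le], ENNReal.ofReal_natCast]
    · rw [show ((N : ℝ) + 1) = ((N + 1 : ℕ) : ℝ) by push_cast; ring,
        ENNReal.ofReal_natCast]
  constructor
  · -- lower bound
    have hlow : ((N - k : ℕ) : ℝ≥0∞) ≤ ∑ j, ν {Y : Fin (N + 1) → ℝ | k + 1 ≤ cnt Y j} := by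
      rw [hint]
      have hconst : ((N - k : ℕ) : ℝ≥0∞) = ∫⁻ _, ((N - k : ℕ) : ℝ≥0∞) ∂ν := by
        simp [lintegral_const, measure_univ]
      rw [hconst]
      refine lintegral_mono fun Y => ?_
      have h1 := comb_lower Y k
      rw [hcardfin] at h1
      exact Nat.cast_le.mpr (by omega : N - k ≤ (univ.filter fun j => k + 1 ≤ cnt Y j).card)
    rw [hset, hofReal]
    rw [ENNReal.div_le_iff_le_mul (Or.inl (by exact_mod_cast Nat.succ_ne_zero N))
      (Or.inl (ENNReal.natCast_ne_top _))]
    rw [mul_comm]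
    exact hlow.trans htot.le
  · -- equality under NoAtoms
    intro hNA
    haveI : NullSingletonClass μ := hNA
    have hae : ∀ᵐ Y ∂ν, Function.Injective Y := by
      rw [ae_iff]
      have hsub : {Y : Fin (N + 1) → ℝ | ¬Function.Injective Y} ⊆
          ⋃ (i) (j) (_ : i ≠ j), {Y : Fin (N + 1) → ℝ | Y i = Y j} := by
        intro Y hY
        simp only [Set.mem_setOf_eq, Function.Injective, not_forall] at hY
        obtain ⟨i, j, hij, hne⟩ := hY
        simp only [Set.mem_iUnion]
        exact ⟨i, j, hne, hij⟩
      exact measure_mono_null hsub (measure_iUnion_null fun i =>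
        measure_iUnion_null fun j => measure_iUnion_null fun hij => null_eq μ hij)
    have hint2 : ∫⁻ Y, ((univ.filter fun j => k + 1 ≤ cnt Y j).card : ℝ≥0∞) ∂ν
        = ((N - k : ℕ) : ℝ≥0∞) := by
      rw [lintegral_congr_ae (g := fun _ => ((N - k : ℕ) : ℝ≥0∞))
        (hae.mono fun Y hY => by
          have h1 := comb_lower Y k
          have h2 := comb_upper Y hY k
          rw [hcardfin] at h1 h2
          show ((univ.filter fun j => k + 1 ≤ cnt Y j).card : ℝ≥0∞)
            = ((N - k : ℕ) : ℝ≥0∞)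
          norm_cast
          omega)]
      simp [lintegral_const, measure_univ]
    have hfin : ((N + 1 : ℕ) : ℝ≥0∞) * ν {Y : Fin (N + 1) → ℝ | k + 1 ≤ cnt Y (Fin.last N)}
        = ((N - k : ℕ) : ℝ≥0∞) := htot.symm.trans (hint.trans hint2)
    rw [hset, hofReal]
    rw [ENNReal.eq_div_iff (by exact_mod_cast Nat.succ_ne_zero N)
      (ENNReal.natCast_ne_top _)]
    exact hfin
end
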